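/- Let A ∈ ℝ^{m×n} with largest singular value λ_max(A) and corresponding normalized singular vector pair (x̄, w̄). Let x⁰ = x̄_r/‖x̄_r‖ where x̄_r is the truncation of x̄ to its r largest-in-magnitude entries (1 ≤ r ≤ m). Then ‖Aᵀ x⁰‖ ≥ √(r/m) · λ_max(A) ≥ √(r/m²) · ‖A‖_F. -/

import Mathlib

open Finset

noncomputable def enorm {ι : Type*} [Fintype ι] (x : ι → ℝ) : ℝ :=
  Real.sqrt (∑ i, x i ^ 2)

def dot {ι : Type*} [Fintype ι] (x y : ι → ℝ) : ℝ := ∑ i, x i * y i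

noncomputable def l0 {ι : Type*} [Fintype ι] (x : ι → ℝ) : ℕ :=
  (Finset.univ.filter fun i => x i ≠ 0).card

def IsTrunc {ι : Type*} [Fintype ι] [DecidableEq ι] (a : ι → ℝ) (r : ℕ) (ar : ι → ℝ) : Prop :=
  ∃ S : Finset ι, S.card = r ∧ (∀ i ∈ S, ar i = a i) ∧ (∀ i ∉ S, ar i = 0) ∧
    ∀ i ∈ S, ∀ j ∉ S, |a j| ≤ |a i|

noncomputable def lmax {m n' : Type*} [Fintype m] [Fintype n'] (A : Matrix m n' ℝ) : ℝ :=
  sSup {c | ∃ x : n' → ℝ, _root_.enorm x = 1 ∧ c = _root_.enorm (A.mulVec x)}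

noncomputable def fnorm {m n' : Type*} [Fintype m] [Fintype n'] (A : Matrix m n' ℝ) : ℝ :=
  Real.sqrt (∑ i, ∑ j, A i j ^ 2)

def tri {n1 n2 n3 : ℕ} (A : Fin n1 → Fin n2 → Fin n3 → ℝ)
    (x : Fin n1 → ℝ) (y : Fin n2 → ℝ) (z : Fin n3 → ℝ) : ℝ :=
  ∑ i, ∑ j, ∑ k, A i j k * x i * y j * z k

def mlin {d : ℕ} {n : Fin d → ℕ} (A : (∀ j, Fin (n j)) → ℝ)
    (x : ∀ j, Fin (n j) → ℝ) : ℝ :=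
  ∑ i, A i * ∏ j, x j (i j)

lemma enorm_nonneg' {ι : Type*} [Fintype ι] (x : ι → ℝ) : 0 ≤ _root_.enorm x := Real.sqrt_nonneg _

lemma enorm_sq {ι : Type*} [Fintype ι] (x : ι → ℝ) : _root_.enorm x ^ 2 = ∑ i, x i ^ 2 :=
  Real.sq_sqrt (Finset.sum_nonneg fun i _ => sq_nonneg _)

lemma abs_le_enorm {ι : Type*} [Fintype ι] (x : ι → ℝ) (i : ι) : |x i| ≤ _root_.enorm x := by
  rw [← Real.sqrt_sq_eq_abs]
  exact Real.sqrt_le_sqrt (Finset.single_le_sum (f := fun i => x i ^ 2)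
    (fun i _ => sq_nonneg _) (mem_univ i))

lemma dot_le_enorm {ι : Type*} [Fintype ι] (x y : ι → ℝ) :
    ∑ i, x i * y i ≤ _root_.enorm x * _root_.enorm y := by
  have h := Finset.sum_mul_sq_le_sq_mul_sq univ x y
  calc ∑ i, x i * y i ≤ |∑ i, x i * y i| := le_abs_self _
    _ = Real.sqrt ((∑ i, x i * y i) ^ 2) := (Real.sqrt_sq_eq_abs _).symm
    _ ≤ Real.sqrt ((∑ i, x i ^ 2) * ∑ i, y i ^ 2) := Real.sqrt_le_sqrt h
    _ = _root_.enorm x * _root_.enorm y := Real.sqrt_mul (Finset.sum_nonneg fun i _ => sq_nonneg _) _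

lemma enorm_mulVec_le {m n : Type*} [Fintype m] [Fintype n] (A : Matrix m n ℝ) (x : n → ℝ) :
    _root_.enorm (A.mulVec x) ≤ fnorm A * _root_.enorm x := by
  have h : _root_.enorm (A.mulVec x) ^ 2 ≤ (fnorm A * _root_.enorm x) ^ 2 := by
    rw [enorm_sq, mul_pow, enorm_sq]
    have hf : fnorm A ^ 2 = ∑ i, ∑ j, A i j ^ 2 :=
      Real.sq_sqrt (Finset.sum_nonneg fun i _ => Finset.sum_nonneg fun j _ => sq_nonneg _)
    rw [hf, Finset.sum_mul]
    apply Finset.sum_le_sum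
    intro i _
    have := Finset.sum_mul_sq_le_sq_mul_sq univ (fun j => A i j) x
    simpa [Matrix.mulVec, dotProduct] using this
  have h2 : 0 ≤ fnorm A * _root_.enorm x :=
    mul_nonneg (Real.sqrt_nonneg _) (enorm_nonneg' _)
  nlinarith [enorm_nonneg' (A.mulVec x)]

lemma lmax_ge {m n : Type*} [Fintype m] [Fintype n] (A : Matrix m n ℝ) (x : n → ℝ)
    (hx : _root_.enorm x = 1) : _root_.enorm (A.mulVec x) ≤ lmax A := by
  apply le_csSup
  · refine ⟨fnorm A, ?_⟩
    rintro c ⟨y, hy, rfl⟩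
    simpa [hy] using enorm_mulVec_le A y
  · exact ⟨x, hx, rfl⟩

lemma enorm_smul' {ι : Type*} [Fintype ι] (c : ℝ) (x : ι → ℝ) :
    _root_.enorm (fun i => c * x i) = |c| * _root_.enorm x := by
  unfold _root_.enorm
  rw [← Real.sqrt_sq_eq_abs, ← Real.sqrt_mul (sq_nonneg c), Finset.mul_sum]
  congr 1
  exact Finset.sum_congr rfl fun i _ => by ring

lemma enorm_eq_zero_iff {ι : Type*} [Fintype ι] (x : ι → ℝ) : _root_.enorm x = 0 ↔ x = 0 := by
  unfold _root_.enorm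
  rw [Real.sqrt_eq_zero (Finset.sum_nonneg fun i _ => sq_nonneg _)]
  constructor
  · intro h; funext i
    have := (Finset.sum_eq_zero_iff_of_nonneg (fun i _ => sq_nonneg (x i))).1 h i (mem_univ i)
    exact pow_eq_zero_iff (by norm_num) |>.1 this
  · rintro rfl; simp

lemma enorm_mulVec_le_lmax {m n : Type*} [Fintype m] [Fintype n] (A : Matrix m n ℝ)
    (hl : 0 ≤ lmax A) (y : n → ℝ) : _root_.enorm (A.mulVec y) ≤ lmax A * _root_.enorm y := by
  by_cases hy : _root_.enorm y = 0
  · have h0m : _root_.enorm ((0 : m → ℝ)) = 0 := (enorm_eq_zero_iff _).2 rfl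
    have h0n : _root_.enorm ((0 : n → ℝ)) = 0 := (enorm_eq_zero_iff _).2 rfl
    rw [(enorm_eq_zero_iff y).1 hy, Matrix.mulVec_zero, h0m, h0n, mul_zero]
  · have ht : 0 < _root_.enorm y := lt_of_le_of_ne (enorm_nonneg' y) (Ne.symm hy)
    set t := _root_.enorm y
    have hx : _root_.enorm (fun j => t⁻¹ * y j) = 1 := by
      rw [enorm_smul', abs_of_pos (inv_pos.2 ht), inv_mul_cancel₀ (ne_of_gt ht)]
    have h1 := lmax_ge A _ hx
    have h2 : A.mulVec (fun j => t⁻¹ * y j) = fun i => t⁻¹ * A.mulVec y i := by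
      funext i
      simp [Matrix.mulVec, dotProduct, Finset.mul_sum]
      exact Finset.sum_congr rfl fun j _ => by ring
    rw [h2, enorm_smul', abs_of_pos (inv_pos.2 ht)] at h1
    calc _root_.enorm (A.mulVec y) = t * (t⁻¹ * _root_.enorm (A.mulVec y)) := by
          field_simp
      _ ≤ t * lmax A := by nlinarith
      _ = lmax A * t := mul_comm _ _

lemma row_le_lmax {m n : Type*} [Fintype m] [Fintype n] (A : Matrix m n ℝ)
    (hl : 0 ≤ lmax A) (i : m) : Real.sqrt (∑ j, A i j ^ 2) ≤ lmax A := by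
  set y : n → ℝ := fun j => A i j with hy
  have hty : Real.sqrt (∑ j, A i j ^ 2) = _root_.enorm y := rfl
  rw [hty]
  set t := _root_.enorm y with htdef
  by_cases ht0 : t = 0
  · rw [ht0]; exact hl
  have ht : 0 < t := lt_of_le_of_ne (enorm_nonneg' y) (Ne.symm ht0)
  have hAyi : A.mulVec y i = t ^ 2 := by
    rw [enorm_sq]
    simp [Matrix.mulVec, dotProduct, hy, pow_two]
  have h1 : t ^ 2 ≤ _root_.enorm (A.mulVec y) := by
    rw [← hAyi]
    exact le_trans (le_abs_self _) (abs_le_enorm _ i)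
  have h2 := enorm_mulVec_le_lmax A hl y
  nlinarith

lemma fnorm_le_sqrt_card_mul_lmax {m n : Type*} [Fintype m] [Fintype n] (A : Matrix m n ℝ)
    (hl : 0 ≤ lmax A) : fnorm A ≤ Real.sqrt (Fintype.card m) * lmax A := by
  have h : fnorm A ^ 2 ≤ (Fintype.card m : ℝ) * lmax A ^ 2 := by
    have hf : fnorm A ^ 2 = ∑ i, ∑ j, A i j ^ 2 :=
      Real.sq_sqrt (Finset.sum_nonneg fun i _ => Finset.sum_nonneg fun j _ => sq_nonneg _)
    rw [hf]
    calc ∑ i, ∑ j, A i j ^ 2 ≤ ∑ _i : m, lmax A ^ 2 := by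
          apply Finset.sum_le_sum
          intro i _
          have := row_le_lmax A hl i
          nlinarith [Real.sq_sqrt (Finset.sum_nonneg (fun j (_ : j ∈ univ) => sq_nonneg (A i j))),
            Real.sqrt_nonneg (∑ j, A i j ^ 2)]
      _ = (Fintype.card m : ℝ) * lmax A ^ 2 := by
          rw [Finset.sum_const, Finset.card_univ, nsmul_eq_mul]
  have h2 : 0 ≤ Real.sqrt (Fintype.card m) * lmax A :=
    mul_nonneg (Real.sqrt_nonneg _) hl
  nlinarith [Real.sqrt_nonneg (∑ i : m, ∑ j : n, A i j ^ 2), Real.sq_sqrt (show (0:ℝ) ≤ (Fintype.card m : ℝ) from Nat.cast_nonneg _)]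

/-- For a normalized leading singular vector pair (x̄,w̄) of A and x⁰ the
normalized r-truncation of x̄: ‖Aᵀx⁰‖ ≥ √(r/m)·λ_max(A) ≥ √(r/m²)·‖A‖_F. -/
theorem stmt_11 {m n : ℕ} (A : Matrix (Fin m) (Fin n) ℝ) (hA : A ≠ 0)
    (xb : Fin m → ℝ) (wb : Fin n → ℝ)
    (hxb : _root_.enorm xb = 1) (hwb : _root_.enorm wb = 1)
    (hsv1 : A.mulVec wb = fun i => lmax A * xb i)
    (hsv2 : A.transpose.mulVec xb = fun j => lmax A * wb j)
    (r : ℕ) (hr1 : 1 ≤ r) (hrm : r ≤ m)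
    (xr : Fin m → ℝ) (htr : IsTrunc xb r xr)
    (x0 : Fin m → ℝ) (hx0 : x0 = fun i => xr i / _root_.enorm xr) :
    _root_.enorm (A.transpose.mulVec x0) ≥ Real.sqrt ((r : ℝ) / m) * lmax A ∧
      Real.sqrt ((r : ℝ) / m) * lmax A ≥ Real.sqrt ((r : ℝ) / (m : ℝ) ^ 2) * fnorm A := by
  obtain ⟨S, hS, hSa, hSb, hSc⟩ := htr
  have hmpos : (0 : ℝ) < m := by exact_mod_cast lt_of_lt_of_le hr1 hrm
  have hrpos : (0 : ℝ) < r := by exact_mod_cast hr1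
  have hmr : (r : ℝ) ≤ m := by exact_mod_cast hrm
  have hl : 0 ≤ lmax A := le_trans (enorm_nonneg' _) (lmax_ge A wb hwb)
  set SS := ∑ i ∈ S, xb i ^ 2 with hSSdef
  have hSne : S.Nonempty := Finset.card_pos.1 (by omega)
  obtain ⟨i0, hi0S, hi0min⟩ := Finset.exists_min_image S (fun i => xb i ^ 2) hSne
  set a := xb i0 ^ 2 with hadef
  have ha : 0 ≤ a := sq_nonneg _
  have h1 : (r : ℝ) * a ≤ SS := by
    have := Finset.card_nsmul_le_sum S (fun i => xb i ^ 2) a hi0min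
    rw [hS] at this
    simpa [nsmul_eq_mul] using this
  have h2 : ∑ i ∈ Sᶜ, xb i ^ 2 ≤ ((m : ℝ) - r) * a := by
    have hb : ∀ j ∈ Sᶜ, xb j ^ 2 ≤ a := by
      intro j hj
      have hjn := Finset.mem_compl.1 hj
      have habs := hSc i0 hi0S j hjn
      calc xb j ^ 2 = |xb j| ^ 2 := (sq_abs _).symm
        _ ≤ |xb i0| ^ 2 := pow_le_pow_left₀ (abs_nonneg _) habs 2
        _ = a := sq_abs _
    have := Finset.sum_le_card_nsmul Sᶜ (fun i => xb i ^ 2) a hb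
    have hcard : Sᶜ.card = m - r := by
      rw [Finset.card_compl, hS]; simp
    rw [hcard] at this
    have : ∑ i ∈ Sᶜ, xb i ^ 2 ≤ ((m - r : ℕ) : ℝ) * a := by
      simpa [nsmul_eq_mul] using this
    rwa [Nat.cast_sub hrm] at this
  have hsum1 : SS + ∑ i ∈ Sᶜ, xb i ^ 2 = 1 := by
    rw [hSSdef, Finset.sum_add_sum_compl S (fun i => xb i ^ 2)]
    rw [← enorm_sq, hxb]; norm_num
  have hSSge : (r : ℝ) / m ≤ SS := by
    rw [div_le_iff₀ hmpos]
    nlinarith [mul_le_mul_of_nonneg_left h2 (le_of_lt hrpos),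
      mul_le_mul_of_nonneg_left h1 (sub_nonneg.2 hmr)]
  set t := _root_.enorm xr with htdef
  have ht0 : 0 ≤ t := enorm_nonneg' _
  have htsq : t ^ 2 = SS := by
    rw [htdef, enorm_sq, ← Finset.sum_add_sum_compl S (fun i => xr i ^ 2)]
    have e1 : ∑ i ∈ S, xr i ^ 2 = SS :=
      Finset.sum_congr rfl fun i hi => by rw [hSa i hi]
    have e2 : ∑ i ∈ Sᶜ, xr i ^ 2 = 0 :=
      Finset.sum_eq_zero fun i hi => by rw [hSb i (Finset.mem_compl.1 hi)]; ring
    rw [e1, e2, add_zero]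
  have ht : 0 < t := by nlinarith [div_pos hrpos hmpos]
  have hdot : ∑ i, xr i * xb i = SS := by
    rw [← Finset.sum_add_sum_compl S (fun i => xr i * xb i)]
    have e1 : ∑ i ∈ S, xr i * xb i = SS :=
      Finset.sum_congr rfl fun i hi => by rw [hSa i hi]; ring
    have e2 : ∑ i ∈ Sᶜ, xr i * xb i = 0 :=
      Finset.sum_eq_zero fun i hi => by rw [hSb i (Finset.mem_compl.1 hi)]; ring
    rw [e1, e2, add_zero]
  -- key dot product identity
  have key : ∑ j, A.transpose.mulVec x0 j * wb j = lmax A * t := by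
    have e1 : ∑ j, A.transpose.mulVec x0 j * wb j
        = dotProduct x0 (A.mulVec wb) := by
      rw [Matrix.dotProduct_mulVec, Matrix.mulVec_transpose]
      rfl
    rw [e1, hsv1]
    simp only [dotProduct, hx0]
    have e2 : ∑ i, xr i / t * (lmax A * xb i) = lmax A / t * ∑ i, xr i * xb i := by
      rw [Finset.mul_sum]
      exact Finset.sum_congr rfl fun i _ => by ring
    rw [e2, hdot, ← htsq]
    field_simp
  have hCS : lmax A * t ≤ _root_.enorm (A.transpose.mulVec x0) := by
    have := dot_le_enorm (A.transpose.mulVec x0) wb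
    rw [key, hwb, mul_one] at this
    exact this
  have hts : Real.sqrt ((r : ℝ) / m) ≤ t := by
    have : Real.sqrt ((r : ℝ) / m) ≤ Real.sqrt (t ^ 2) :=
      Real.sqrt_le_sqrt (by rw [htsq]; exact hSSge)
    rwa [Real.sqrt_sq ht0] at this
  constructor
  · calc _root_.enorm (A.transpose.mulVec x0) ≥ lmax A * t := hCS
      _ ≥ lmax A * Real.sqrt ((r : ℝ) / m) := by
          exact mul_le_mul_of_nonneg_left hts hl
      _ = Real.sqrt ((r : ℝ) / m) * lmax A := mul_comm _ _
  · have hfn : fnorm A ≤ Real.sqrt (m : ℝ) * lmax A := by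
      have := fnorm_le_sqrt_card_mul_lmax A hl
      simpa using this
    calc Real.sqrt ((r : ℝ) / (m : ℝ) ^ 2) * fnorm A
        ≤ Real.sqrt ((r : ℝ) / (m : ℝ) ^ 2) * (Real.sqrt (m : ℝ) * lmax A) :=
          mul_le_mul_of_nonneg_left hfn (Real.sqrt_nonneg _)
      _ = (Real.sqrt ((r : ℝ) / (m : ℝ) ^ 2) * Real.sqrt (m : ℝ)) * lmax A := by ring
      _ = Real.sqrt ((r : ℝ) / m) * lmax A := by
          rw [← Real.sqrt_mul (by positivity)]
          have he : (r : ℝ) / (m : ℝ) ^ 2 * m = (r : ℝ) / m := by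
            field_simp
          rw [he]
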